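/- Let f : [0,1] → ℝⁿ be a regular smooth curve with curvature vector κ. Then for all k ∈ ℕ there is a constant C = C(n,k) such that ‖κ‖_{k,2} ≤ C ( ‖∇ₛᵏκ‖₂ + ‖κ‖₂ ), where the norms are the scale-invariant norms. -/

import Mathlib

open Set MeasureTheory
open scoped RealInnerProductSpace

noncomputable section

/-- Arc-length derivative `∂ₛ g = |∂ₓ f|⁻¹ ∂ₓ g` along the curve `f`. -/
def sDeriv {n : ℕ} {F : Type*} [NormedAddCommGroup F] [NormedSpace ℝ F]
    (f : ℝ → EuclideanSpace ℝ (Fin n)) (g : ℝ → F) (x : ℝ) : F :=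
  ‖deriv f x‖⁻¹ • deriv g x

/-- The unit tangent `τ = ∂ₛ f`. -/
def tau {n : ℕ} (f : ℝ → EuclideanSpace ℝ (Fin n)) : ℝ → EuclideanSpace ℝ (Fin n) :=
  sDeriv f f

/-- The curvature vector `κ = ∂ₛ² f`. -/
def kappa {n : ℕ} (f : ℝ → EuclideanSpace ℝ (Fin n)) : ℝ → EuclideanSpace ℝ (Fin n) :=
  sDeriv f (tau f)

/-- Normal projection of the arc-length derivative: `∇ₛψ = ∂ₛψ − ⟨∂ₛψ, τ⟩ τ`. -/
def nablaS {n : ℕ} (f ψ : ℝ → EuclideanSpace ℝ (Fin n)) (x : ℝ) :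
    EuclideanSpace ℝ (Fin n) :=
  sDeriv f ψ x - ⟪sDeriv f ψ x, tau f x⟫ • tau f x

/-- Iterated normal arc-length derivative `∇ₛ^m`. -/
def nablaSIter {n : ℕ} (f : ℝ → EuclideanSpace ℝ (Fin n)) :
    ℕ → (ℝ → EuclideanSpace ℝ (Fin n)) → ℝ → EuclideanSpace ℝ (Fin n)
  | 0, ψ => ψ
  | m + 1, ψ => nablaS f (nablaSIter f m ψ)

/-- Length of the curve `f` over `[0,1]`. -/
def curveLen {n : ℕ} (f : ℝ → EuclideanSpace ℝ (Fin n)) : ℝ :=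
  ∫ x in (0 : ℝ)..1, ‖deriv f x‖

/-- Scale-invariant norm `‖∇ₛⁱκ‖_p = L(f)^{i+1-1/p} (∫₀¹ |∇ₛⁱκ|^p ds)^{1/p}`. -/
def knorm {n : ℕ} (f : ℝ → EuclideanSpace ℝ (Fin n)) (i : ℕ) (p : ℝ) : ℝ :=
  curveLen f ^ ((i : ℝ) + 1 - 1 / p) *
    (∫ x in (0 : ℝ)..1, ‖nablaSIter f i (kappa f) x‖ ^ p * ‖deriv f x‖) ^ (1 / p)

/-- Scale-invariant norm `‖κ‖_{k,p} = Σ_{i=0}^{k} ‖∇ₛⁱκ‖_p`. -/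
def knormSum {n : ℕ} (f : ℝ → EuclideanSpace ℝ (Fin n)) (k : ℕ) (p : ℝ) : ℝ :=
  ∑ i ∈ Finset.range (k + 1), knorm f i p


variable {n : ℕ} {f : ℝ → EuclideanSpace ℝ (Fin n)}

lemma isOpen_U (hf : ContDiff ℝ (⊤ : ℕ∞) f) : IsOpen {x | deriv f x ≠ 0} :=
  isOpen_compl_iff.mpr (isClosed_singleton.preimage (hf.continuous_deriv (mod_cast le_top)))

lemma contDiffOn_rhoInv (hf : ContDiff ℝ (⊤ : ℕ∞) f) :
    ContDiffOn ℝ (⊤ : ℕ∞) (fun x => ‖deriv f x‖⁻¹) {x | deriv f x ≠ 0} := by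
  intro x hx
  exact ((((contDiff_infty_iff_deriv.mp (by exact_mod_cast hf)).2.of_le
    (mod_cast le_top)).contDiffAt.norm ℝ hx).inv (norm_ne_zero_iff.2 hx)).contDiffWithinAt

lemma contDiffOn_sDeriv {F : Type*} [NormedAddCommGroup F] [NormedSpace ℝ F]
    (hf : ContDiff ℝ (⊤ : ℕ∞) f) {g : ℝ → F}
    (hg : ContDiffOn ℝ (⊤ : ℕ∞) g {x | deriv f x ≠ 0}) :
    ContDiffOn ℝ (⊤ : ℕ∞) (sDeriv f g) {x | deriv f x ≠ 0} := by
  have hd : ContDiffOn ℝ (⊤ : ℕ∞) (deriv g) {x | deriv f x ≠ 0} := by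
    have := hg.deriv_of_isOpen (isOpen_U hf) (m := (⊤:ℕ∞)) ?_
    · exact this
    · exact_mod_cast le_top
  exact (contDiffOn_rhoInv hf).smul hd

lemma contDiffOn_tau (hf : ContDiff ℝ (⊤ : ℕ∞) f) :
    ContDiffOn ℝ (⊤ : ℕ∞) (tau f) {x | deriv f x ≠ 0} :=
  contDiffOn_sDeriv hf hf.contDiffOn

lemma contDiffOn_kappa (hf : ContDiff ℝ (⊤ : ℕ∞) f) :
    ContDiffOn ℝ (⊤ : ℕ∞) (kappa f) {x | deriv f x ≠ 0} :=
  contDiffOn_sDeriv hf (contDiffOn_tau hf)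

lemma contDiffOn_nablaS (hf : ContDiff ℝ (⊤ : ℕ∞) f) {ψ : ℝ → EuclideanSpace ℝ (Fin n)}
    (hψ : ContDiffOn ℝ (⊤ : ℕ∞) ψ {x | deriv f x ≠ 0}) :
    ContDiffOn ℝ (⊤ : ℕ∞) (nablaS f ψ) {x | deriv f x ≠ 0} := by
  have h1 := contDiffOn_sDeriv hf hψ
  have h2 := contDiffOn_tau (f := f) hf
  exact h1.sub ((h1.inner ℝ h2).smul h2)

lemma contDiffOn_psi (hf : ContDiff ℝ (⊤ : ℕ∞) f) (i : ℕ) :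
    ContDiffOn ℝ (⊤ : ℕ∞) (nablaSIter f i (kappa f)) {x | deriv f x ≠ 0} := by
  induction i with
  | zero => exact contDiffOn_kappa hf
  | succ m ih => exact contDiffOn_nablaS hf ih

lemma norm_tau (hf : ContDiff ℝ (⊤ : ℕ∞) f) {x : ℝ} (hx : deriv f x ≠ 0) :
    ‖tau f x‖ = 1 := by
  simp [tau, sDeriv, norm_smul, abs_of_nonneg, inv_mul_cancel₀ (norm_ne_zero_iff.2 hx)]

lemma differentiableAt_psi (hf : ContDiff ℝ (⊤ : ℕ∞) f) (i : ℕ) {x : ℝ}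
    (hx : deriv f x ≠ 0) : DifferentiableAt ℝ (nablaSIter f i (kappa f)) x :=
  ((contDiffOn_psi hf i).differentiableOn (by simp)).differentiableAt
    ((isOpen_U hf).mem_nhds hx)

lemma differentiableAt_tau (hf : ContDiff ℝ (⊤ : ℕ∞) f) {x : ℝ}
    (hx : deriv f x ≠ 0) : DifferentiableAt ℝ (tau f) x :=
  ((contDiffOn_tau hf).differentiableOn (by simp)).differentiableAt
    ((isOpen_U hf).mem_nhds hx)

lemma inner_tau_tau (hf : ContDiff ℝ (⊤ : ℕ∞) f) {x : ℝ} (hx : deriv f x ≠ 0) :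
    ⟪tau f x, tau f x⟫ = 1 := by
  rw [real_inner_self_eq_norm_mul_norm, norm_tau hf hx]; norm_num

lemma inner_kappa_tau (hf : ContDiff ℝ (⊤ : ℕ∞) f) {x : ℝ} (hx : deriv f x ≠ 0) :
    ⟪kappa f x, tau f x⟫ = 0 := by
  have hτ := differentiableAt_tau hf hx
  have hd := hτ.hasDerivAt.inner ℝ hτ.hasDerivAt
  have hev : (fun y => ⟪tau f y, tau f y⟫) =ᶠ[nhds x] (fun _ => (1:ℝ)) :=
    Filter.eventually_of_mem ((isOpen_U hf).mem_nhds hx) (fun y hy => inner_tau_tau hf hy)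
  have h0 : deriv (fun y => ⟪tau f y, tau f y⟫) x = 0 := by
    rw [hev.deriv_eq]; simp
  rw [hd.deriv] at h0
  have h1 : ⟪deriv (tau f) x, tau f x⟫ = 0 := by
    rw [real_inner_comm] at h0; linarith
  show ⟪sDeriv f (tau f) x, tau f x⟫ = 0
  rw [sDeriv, real_inner_smul_left, h1, mul_zero]

lemma inner_psi_tau (hf : ContDiff ℝ (⊤ : ℕ∞) f) (i : ℕ) {x : ℝ} (hx : deriv f x ≠ 0) :
    ⟪nablaSIter f i (kappa f) x, tau f x⟫ = 0 := by
  cases i with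
  | zero => exact inner_kappa_tau hf hx
  | succ m =>
    show ⟪nablaS f (nablaSIter f m (kappa f)) x, tau f x⟫ = 0
    rw [nablaS, inner_sub_left, real_inner_smul_left, inner_tau_tau hf hx]
    ring

lemma inner_psi_deriv (hf : ContDiff ℝ (⊤ : ℕ∞) f) (i j : ℕ) {x : ℝ} (hx : deriv f x ≠ 0) :
    ⟪nablaSIter f i (kappa f) x, deriv (nablaSIter f j (kappa f)) x⟫
      = ‖deriv f x‖ * ⟪nablaSIter f i (kappa f) x, nablaSIter f (j+1) (kappa f) x⟫ := by
  have h1 : nablaSIter f (j+1) (kappa f) x = nablaS f (nablaSIter f j (kappa f)) x := rfl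
  rw [h1, nablaS, inner_sub_right, real_inner_smul_right, inner_psi_tau hf i hx,
    mul_zero, sub_zero, sDeriv, real_inner_smul_right]
  have hρ : ‖deriv f x‖ ≠ 0 := norm_ne_zero_iff.2 hx
  field_simp

lemma psi_hasDerivAt_inner (hf : ContDiff ℝ (⊤ : ℕ∞) f) (i j : ℕ) {x : ℝ}
    (hx : deriv f x ≠ 0) :
    HasDerivAt (fun y => ⟪nablaSIter f i (kappa f) y, nablaSIter f j (kappa f) y⟫)
      (‖deriv f x‖ * (⟪nablaSIter f i (kappa f) x, nablaSIter f (j+1) (kappa f) x⟫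
        + ⟪nablaSIter f (i+1) (kappa f) x, nablaSIter f j (kappa f) x⟫)) x := by
  have hd := ((differentiableAt_psi hf i hx).hasDerivAt).inner ℝ
    ((differentiableAt_psi hf j hx).hasDerivAt)
  have e1 := inner_psi_deriv hf i j hx
  have e2 := inner_psi_deriv hf j i hx
  have e2' : ⟪deriv (nablaSIter f i (kappa f)) x, nablaSIter f j (kappa f) x⟫
      = ‖deriv f x‖ * ⟪nablaSIter f (i+1) (kappa f) x, nablaSIter f j (kappa f) x⟫ := by
    exact (real_inner_comm _ _).trans
      (e2.trans (by rw [real_inner_comm (nablaSIter f j (kappa f) x)]))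
  refine hd.congr_deriv ?_
  rw [e1, e2']
  ring

-- numeric helpers
lemma sq_le_imp {a b : ℝ} (hb : 0 ≤ b) (h : a^2 ≤ b^2) : a ≤ b := by
  nlinarith [sq_nonneg (a - b), sq_nonneg (a + b)]

lemma quad_root_bound {x p q : ℝ} (hp : 0 ≤ p) (hq : 0 ≤ q) (h : x^2 ≤ q + p*x) :
    x ≤ p + Real.sqrt q := by
  by_contra hc
  push_neg at hc
  have hsq : 0 ≤ Real.sqrt q := Real.sqrt_nonneg q
  have hx : 0 < x := lt_of_le_of_lt (by positivity) hc
  nlinarith [hc, Real.sq_sqrt hq, Real.sqrt_nonneg q]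

lemma le_sqrt_of_forall {I P Q : ℝ} (hP : 0 ≤ P) (hQ : 0 ≤ Q)
    (h : ∀ t : ℝ, 0 < t → I ≤ (t*P + Q/t)/2) : I ≤ Real.sqrt (P*Q) := by
  rcases eq_or_lt_of_le hP with hP0 | hP0
  · have : I ≤ 0 := by
      by_contra hc
      push_neg at hc
      have ht : (0:ℝ) < (Q+1)/I := by positivity
      have h2 := h _ ht
      rw [← hP0] at h2
      have hQt : Q / ((Q+1)/I) = Q*I/(Q+1) := by field_simp
      rw [hQt] at h2
      have h3 : Q*I/(Q+1) < I := by
        rw [div_lt_iff₀ (by positivity)]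
        nlinarith
      linarith
    exact this.trans (Real.sqrt_nonneg _)
  rcases eq_or_lt_of_le hQ with hQ0 | hQ0
  · have : I ≤ 0 := by
      by_contra hc
      push_neg at hc
      have ht : (0:ℝ) < I/P := by positivity
      have h2 := h _ ht
      rw [← hQ0] at h2
      have : I ≤ (I/P*P)/2 := by simpa using h2
      rw [div_mul_cancel₀ _ (ne_of_gt hP0)] at this
      linarith
    exact this.trans (Real.sqrt_nonneg _)
  · have hsP : Real.sqrt P > 0 := Real.sqrt_pos.2 hP0
    have hsQ : Real.sqrt Q > 0 := Real.sqrt_pos.2 hQ0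
    have ht : (0:ℝ) < Real.sqrt Q / Real.sqrt P := by positivity
    have h2 := h _ ht
    have hPP : Real.sqrt P * Real.sqrt P = P := Real.mul_self_sqrt hP
    have hQQ : Real.sqrt Q * Real.sqrt Q = Q := Real.mul_self_sqrt hQ
    have key : (Real.sqrt Q / Real.sqrt P * P + Q / (Real.sqrt Q / Real.sqrt P))/2
        = Real.sqrt P * Real.sqrt Q := by
      field_simp
      nlinarith [hPP, hQQ]
    rw [key] at h2
    rwa [Real.sqrt_mul hP]

-- continuity / integrability layer
lemma contOn_psi_Icc (hf : ContDiff ℝ (⊤ : ℕ∞) f)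
    (hreg : ∀ x ∈ Icc (0:ℝ) 1, deriv f x ≠ 0) (i : ℕ) :
    ContinuousOn (nablaSIter f i (kappa f)) (Icc (0:ℝ) 1) :=
  ((contDiffOn_psi hf i).continuousOn).mono (fun x hx => hreg x hx)

lemma cont_rho (hf : ContDiff ℝ (⊤ : ℕ∞) f) : Continuous (fun x => ‖deriv f x‖) :=
  (hf.continuous_deriv (mod_cast le_top)).norm

def aInt (f : ℝ → EuclideanSpace ℝ (Fin n)) (i : ℕ) : ℝ :=
  ∫ x in (0:ℝ)..1, ‖nablaSIter f i (kappa f) x‖^2 * ‖deriv f x‖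

lemma II_sq (hf : ContDiff ℝ (⊤ : ℕ∞) f) (hreg : ∀ x ∈ Icc (0:ℝ) 1, deriv f x ≠ 0) (i : ℕ) :
    IntervalIntegrable (fun x => ‖nablaSIter f i (kappa f) x‖^2 * ‖deriv f x‖)
      MeasureTheory.volume 0 1 := by
  apply ContinuousOn.intervalIntegrable
  rw [uIcc_of_le (by norm_num : (0:ℝ) ≤ 1)]
  exact (((contOn_psi_Icc hf hreg i).norm.pow 2).mul (cont_rho hf).continuousOn)

lemma II_prod (hf : ContDiff ℝ (⊤ : ℕ∞) f) (hreg : ∀ x ∈ Icc (0:ℝ) 1, deriv f x ≠ 0) (i j : ℕ) :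
    IntervalIntegrable
      (fun x => ‖nablaSIter f i (kappa f) x‖ * ‖nablaSIter f j (kappa f) x‖ * ‖deriv f x‖)
      MeasureTheory.volume 0 1 := by
  apply ContinuousOn.intervalIntegrable
  rw [uIcc_of_le (by norm_num : (0:ℝ) ≤ 1)]
  exact ((contOn_psi_Icc hf hreg i).norm.mul (contOn_psi_Icc hf hreg j).norm).mul
    (cont_rho hf).continuousOn

lemma aInt_nonneg (hf : ContDiff ℝ (⊤ : ℕ∞) f)
    (hreg : ∀ x ∈ Icc (0:ℝ) 1, deriv f x ≠ 0) (i : ℕ) : 0 ≤ aInt f i := by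
  apply intervalIntegral.integral_nonneg (by norm_num : (0:ℝ) ≤ 1)
  intro u _
  positivity

lemma curveLen_pos (hf : ContDiff ℝ (⊤ : ℕ∞) f)
    (hreg : ∀ x ∈ Icc (0:ℝ) 1, deriv f x ≠ 0) : 0 < curveLen f := by
  apply intervalIntegral.integral_pos (by norm_num : (0:ℝ) < 1)
    ((cont_rho hf).continuousOn)
  · intro x _; exact norm_nonneg _
  · exact ⟨1/2, by norm_num, norm_pos_iff.2 (hreg (1/2) (by norm_num))⟩

-- Cauchy-Schwarz
lemma CS (hf : ContDiff ℝ (⊤ : ℕ∞) f) (hreg : ∀ x ∈ Icc (0:ℝ) 1, deriv f x ≠ 0) (i j : ℕ) :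
    (∫ x in (0:ℝ)..1,
        ‖nablaSIter f i (kappa f) x‖ * ‖nablaSIter f j (kappa f) x‖ * ‖deriv f x‖)
      ≤ Real.sqrt (aInt f i * aInt f j) := by
  apply le_sqrt_of_forall (aInt_nonneg hf hreg i) (aInt_nonneg hf hreg j)
  intro t ht
  have hmono := intervalIntegral.integral_mono_on (by norm_num : (0:ℝ) ≤ 1)
    (II_prod hf hreg i j)
    ((((II_sq hf hreg i).const_mul t).add ((II_sq hf hreg j).div_const t)).div_const 2)
    (fun x _ => by
      have h1 : 0 ≤ ‖deriv f x‖ := norm_nonneg _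
      have h2 := mul_nonneg (sq_nonneg (t*‖nablaSIter f i (kappa f) x‖
        - ‖nablaSIter f j (kappa f) x‖)) h1
      rw [le_div_iff₀ (by norm_num : (0:ℝ) < 2)]
      have hBt : ‖nablaSIter f j (kappa f) x‖^2*‖deriv f x‖/t*t
          = ‖nablaSIter f j (kappa f) x‖^2*‖deriv f x‖ := div_mul_cancel₀ _ (ne_of_gt ht)
      nlinarith [h2, ht, hBt])
  calc (∫ x in (0:ℝ)..1,
        ‖nablaSIter f i (kappa f) x‖ * ‖nablaSIter f j (kappa f) x‖ * ‖deriv f x‖)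
      ≤ _ := hmono
    _ = (t * aInt f i + aInt f j / t)/2 := by
        rw [intervalIntegral.integral_div, intervalIntegral.integral_add
          ((II_sq hf hreg i).const_mul t) ((II_sq hf hreg j).div_const t),
          intervalIntegral.integral_const_mul, intervalIntegral.integral_div]
        rfl

lemma uIoc_sub {y e : ℝ} (hy : y ∈ Icc (0:ℝ) 1) (he : e ∈ Icc (0:ℝ) 1) :
    Set.uIoc y e ⊆ Set.uIoc (0:ℝ) 1 := by
  rw [uIoc_of_le (by norm_num : (0:ℝ) ≤ 1)]
  intro z hz
  rcases Set.mem_uIoc.1 hz with ⟨h1, h2⟩ | ⟨h1, h2⟩ <;>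
    exact ⟨by rcases hy with ⟨a,b⟩; rcases he with ⟨c,d⟩; linarith,
      by rcases hy with ⟨a,b⟩; rcases he with ⟨c,d⟩; linarith⟩

lemma uIcc_sub {y e : ℝ} (hy : y ∈ Icc (0:ℝ) 1) (he : e ∈ Icc (0:ℝ) 1) :
    uIcc y e ⊆ Icc (0:ℝ) 1 := by
  rw [show Icc (0:ℝ) 1 = uIcc (0:ℝ) 1 from (uIcc_of_le (by norm_num)).symm]
  exact uIcc_subset_uIcc (by rwa [uIcc_of_le (by norm_num : (0:ℝ) ≤ 1)])
    (by rwa [uIcc_of_le (by norm_num : (0:ℝ) ≤ 1)])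

lemma cont_D (hf : ContDiff ℝ (⊤ : ℕ∞) f) (hreg : ∀ x ∈ Icc (0:ℝ) 1, deriv f x ≠ 0)
    (i j : ℕ) :
    ContinuousOn (fun x => ‖deriv f x‖ * (⟪nablaSIter f i (kappa f) x, nablaSIter f (j+1) (kappa f) x⟫
      + ⟪nablaSIter f (i+1) (kappa f) x, nablaSIter f j (kappa f) x⟫)) (Icc (0:ℝ) 1) :=
  ((cont_rho hf).continuousOn).mul
    (((contOn_psi_Icc hf hreg i).inner (contOn_psi_Icc hf hreg (j+1))).add
      ((contOn_psi_Icc hf hreg (i+1)).inner (contOn_psi_Icc hf hreg j)))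

lemma agmon (hf : ContDiff ℝ (⊤ : ℕ∞) f) (hreg : ∀ x ∈ Icc (0:ℝ) 1, deriv f x ≠ 0)
    (j : ℕ) {e : ℝ} (he : e ∈ Icc (0:ℝ) 1) :
    ‖nablaSIter f j (kappa f) e‖^2
      ≤ aInt f j / curveLen f + 2 * Real.sqrt (aInt f j * aInt f (j+1)) := by
  set ψ := nablaSIter f j (kappa f) with hψ
  set ψ' := nablaSIter f (j+1) (kappa f) with hψ'
  -- minimum point
  obtain ⟨y, hy, hmin⟩ := isCompact_Icc.exists_isMinOn (nonempty_Icc.2 (by norm_num : (0:ℝ) ≤ 1))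
    ((contOn_psi_Icc hf hreg j).norm.pow 2)
  have hmin' : ∀ z ∈ Icc (0:ℝ) 1, ‖ψ y‖^2 ≤ ‖ψ z‖^2 := fun z hz => hmin hz
  have hL := curveLen_pos hf hreg
  have hmean : ‖ψ y‖^2 ≤ aInt f j / curveLen f := by
    rw [le_div_iff₀ hL]
    have h1 : ∫ x in (0:ℝ)..1, ‖ψ y‖^2 * ‖deriv f x‖ ≤ aInt f j :=
      intervalIntegral.integral_mono_on (by norm_num)
        (((cont_rho hf).intervalIntegrable 0 1).const_mul _) (II_sq hf hreg j)
        (fun z hz => mul_le_mul_of_nonneg_right (hmin' z hz) (norm_nonneg _))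
    rwa [intervalIntegral.integral_const_mul] at h1
  -- FTC from y to e
  set D : ℝ → ℝ := fun x => ‖deriv f x‖ * (⟪ψ x, ψ' x⟫ + ⟪ψ' x, ψ x⟫) with hD
  have hftc : ∫ x in y..e, D x = ‖ψ e‖^2 - ‖ψ y‖^2 := by
    have := intervalIntegral.integral_eq_sub_of_hasDerivAt
      (f := fun x => ⟪ψ x, ψ x⟫) (f' := D)
      (fun x hx => psi_hasDerivAt_inner hf j j (hreg x (uIcc_sub hy he hx)))
      (((cont_D hf hreg j j).mono (uIcc_sub hy he)).intervalIntegrable)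
    rw [this]
    simp only [real_inner_self_eq_norm_sq]
  have hDabsInt : IntervalIntegrable (fun x => |D x|) MeasureTheory.volume 0 1 := by
    apply ContinuousOn.intervalIntegrable
    rw [uIcc_of_le (by norm_num : (0:ℝ) ≤ 1)]
    exact (cont_D hf hreg j j).abs
  have habs : |∫ x in y..e, D x| ≤ ∫ x in (0:ℝ)..1, |D x| := by
    have h1 : |∫ x in y..e, D x| ≤ |(∫ x in y..e, |D x|)| := by
      have h1' : ‖∫ x in y..e, D x‖ ≤ |∫ x in y..e, ‖D x‖| :=
        intervalIntegral.norm_integral_le_abs_integral_norm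
      simpa [Real.norm_eq_abs] using h1'
    have h2 : |(∫ x in y..e, |D x|)| ≤ |(∫ x in (0:ℝ)..1, |D x|)| :=
      intervalIntegral.abs_integral_mono_interval (uIoc_sub hy he)
        (Filter.Eventually.of_forall (fun x => abs_nonneg _)) hDabsInt
    have h3 : |(∫ x in (0:ℝ)..1, |D x|)| = ∫ x in (0:ℝ)..1, |D x| :=
      abs_of_nonneg (intervalIntegral.integral_nonneg (by norm_num) (fun u _ => abs_nonneg _))
    linarith
  have hDb : ∫ x in (0:ℝ)..1, |D x|
      ≤ 2 * Real.sqrt (aInt f j * aInt f (j+1)) := by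
    have h1 : ∫ x in (0:ℝ)..1, |D x|
        ≤ ∫ x in (0:ℝ)..1, 2 * (‖ψ x‖ * ‖ψ' x‖ * ‖deriv f x‖) := by
      apply intervalIntegral.integral_mono_on (by norm_num)
      · exact hDabsInt
      · exact (II_prod hf hreg j (j+1)).const_mul 2
      · intro x _
        have e1 := abs_real_inner_le_norm (ψ x) (ψ' x)
        have e2 := abs_real_inner_le_norm (ψ' x) (ψ x)
        have e3 : |D x| ≤ ‖deriv f x‖ * (|⟪ψ x, ψ' x⟫| + |⟪ψ' x, ψ x⟫|) := by
          rw [hD, abs_mul, abs_of_nonneg (norm_nonneg _)]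
          exact mul_le_mul_of_nonneg_left (abs_add_le _ _) (norm_nonneg _)
        have e4 : ‖deriv f x‖ * (|⟪ψ x, ψ' x⟫| + |⟪ψ' x, ψ x⟫|)
            ≤ 2 * (‖ψ x‖ * ‖ψ' x‖ * ‖deriv f x‖) := by
          nlinarith [norm_nonneg (deriv f x), norm_nonneg (ψ x), norm_nonneg (ψ' x)]
        linarith
    rw [intervalIntegral.integral_const_mul] at h1
    have h2 := CS hf hreg j (j+1)
    linarith
  have hee : ‖ψ e‖^2 = ‖ψ y‖^2 + ∫ x in y..e, D x := by rw [hftc]; ring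
  have := neg_abs_le (∫ x in y..e, D x)
  have := le_abs_self (∫ x in y..e, D x)
  linarith

lemma ibp (hf : ContDiff ℝ (⊤ : ℕ∞) f) (hreg : ∀ x ∈ Icc (0:ℝ) 1, deriv f x ≠ 0) (i : ℕ) :
    aInt f (i+1) ≤ ‖nablaSIter f i (kappa f) 1‖ * ‖nablaSIter f (i+1) (kappa f) 1‖
      + ‖nablaSIter f i (kappa f) 0‖ * ‖nablaSIter f (i+1) (kappa f) 0‖
      + Real.sqrt (aInt f i * aInt f (i+2)) := by
  set ψ := nablaSIter f i (kappa f)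
  set ψ' := nablaSIter f (i+1) (kappa f)
  set ψ'' := nablaSIter f (i+2) (kappa f)
  have hIccU : ∀ x ∈ uIcc (0:ℝ) 1, deriv f x ≠ 0 := by
    rw [uIcc_of_le (by norm_num : (0:ℝ) ≤ 1)]; exact hreg
  have hE1 : IntervalIntegrable (fun x => ⟪ψ x, ψ'' x⟫ * ‖deriv f x‖)
      MeasureTheory.volume 0 1 := by
    apply ContinuousOn.intervalIntegrable
    rw [uIcc_of_le (by norm_num : (0:ℝ) ≤ 1)]
    exact ((contOn_psi_Icc hf hreg i).inner (contOn_psi_Icc hf hreg (i+2))).mul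
      (cont_rho hf).continuousOn
  have hftc : ∫ x in (0:ℝ)..1, (⟪ψ x, ψ'' x⟫ * ‖deriv f x‖ + ‖ψ' x‖^2 * ‖deriv f x‖)
      = ⟪ψ 1, ψ' 1⟫ - ⟪ψ 0, ψ' 0⟫ := by
    apply intervalIntegral.integral_eq_sub_of_hasDerivAt
      (f := fun x => (⟪ψ x, ψ' x⟫ : ℝ))
    · intro x hx
      have h := psi_hasDerivAt_inner hf i (i+1) (hIccU x hx)
      refine h.congr_deriv ?_
      rw [← real_inner_self_eq_norm_sq]
      ring
    · apply (hE1.add (II_sq hf hreg (i+1)))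
  have hsplit : aInt f (i+1) = (⟪ψ 1, ψ' 1⟫ - ⟪ψ 0, ψ' 0⟫)
      - ∫ x in (0:ℝ)..1, ⟪ψ x, ψ'' x⟫ * ‖deriv f x‖ := by
    rw [← hftc, intervalIntegral.integral_add hE1 (II_sq hf hreg (i+1))]
    rw [show aInt f (i+1) = ∫ x in (0:ℝ)..1, ‖ψ' x‖^2 * ‖deriv f x‖ from rfl]
    ring
  have hb1 := real_inner_le_norm (ψ 1) (ψ' 1)
  have hb0 : -⟪ψ 0, ψ' 0⟫ ≤ ‖ψ 0‖ * ‖ψ' 0‖ := by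
    have := abs_real_inner_le_norm (ψ 0) (ψ' 0)
    have := neg_abs_le ⟪ψ 0, ψ' 0⟫
    linarith
  have hb2 : -(∫ x in (0:ℝ)..1, ⟪ψ x, ψ'' x⟫ * ‖deriv f x‖)
      ≤ Real.sqrt (aInt f i * aInt f (i+2)) := by
    have h1 : |∫ x in (0:ℝ)..1, ⟪ψ x, ψ'' x⟫ * ‖deriv f x‖|
        ≤ ∫ x in (0:ℝ)..1, |⟪ψ x, ψ'' x⟫ * ‖deriv f x‖| :=
      intervalIntegral.abs_integral_le_integral_abs (by norm_num)
    have h2 : ∫ x in (0:ℝ)..1, |⟪ψ x, ψ'' x⟫ * ‖deriv f x‖|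
        ≤ ∫ x in (0:ℝ)..1, ‖ψ x‖ * ‖ψ'' x‖ * ‖deriv f x‖ := by
      apply intervalIntegral.integral_mono_on (by norm_num)
      · exact hE1.abs
      · exact II_prod hf hreg i (i+2)
      · intro x _
        rw [abs_mul, abs_of_nonneg (norm_nonneg (deriv f x))]
        exact mul_le_mul_of_nonneg_right (abs_real_inner_le_norm _ _) (norm_nonneg _)
    have h3 := CS hf hreg i (i+2)
    have := neg_abs_le (∫ x in (0:ℝ)..1, ⟪ψ x, ψ'' x⟫ * ‖deriv f x‖)
    linarith
  linarith [hsplit, hb1, hb0, hb2]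

set_option maxHeartbeats 1000000 in
lemma interp_num {x y z : ℝ} (hx : 0 ≤ x) (hy : 0 ≤ y) (hz : 0 ≤ z)
    (h : y^2 ≤ 2*Real.sqrt ((x^2+2*x*y)*(y^2+2*y*z)) + x*z) :
    y^2 ≤ 10000*(x^2 + x*z) := by
  by_contra hc
  push_neg at hc
  have hs : Real.sqrt ((x^2+2*x*y)*(y^2+2*y*z)) ^ 2 = (x^2+2*x*y)*(y^2+2*y*z) :=
    Real.sq_sqrt (by positivity)
  have hs0 : 0 ≤ Real.sqrt ((x^2+2*x*y)*(y^2+2*y*z)) := Real.sqrt_nonneg _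
  set s := Real.sqrt ((x^2+2*x*y)*(y^2+2*y*z)) with hsdef
  have h100 : 100 * x ≤ y := by
    nlinarith [sq_nonneg (y - 100*x), sq_nonneg (y + 100*x)]
  have hy0 : 0 < y := by nlinarith
  have hxz : 10000 * (x*z) < y^2 := by nlinarith
  have h1 : (y^2 - x*z)^2 ≤ 4*((x^2+2*x*y)*(y^2+2*y*z)) := by nlinarith
  have h2 : x*z*y^2 ≤ y^4/10000 := by nlinarith [mul_le_mul_of_nonneg_right hxz.le (sq_nonneg y)]
  have h3 : x^2 ≤ y^2/10000 := by nlinarith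
  have h4 : x^2*y^2 ≤ y^4/10000 := by nlinarith [mul_le_mul_of_nonneg_right h3 (sq_nonneg y)]
  have h5' : x*(x*z) ≤ (y/100)*(y^2/10000) :=
    mul_le_mul (by linarith) (by nlinarith) (by positivity) (by positivity)
  have h5 : x^2*y*z ≤ y^4/1000000 := by nlinarith [mul_le_mul_of_nonneg_right h5' hy]
  have h6 : x*y^3 ≤ y^4/100 := by nlinarith [mul_le_mul_of_nonneg_right h100 (pow_nonneg hy 3)]
  have h7 : x*y^2*z ≤ y^4/10000 := by nlinarith [mul_le_mul_of_nonneg_right hxz.le (sq_nonneg y)]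
  nlinarith [h1, h2, h4, h5, h6, h7, sq_nonneg (x*z), pow_pos hy0 4]

lemma diamond (hf : ContDiff ℝ (⊤ : ℕ∞) f) (hreg : ∀ x ∈ Icc (0:ℝ) 1, deriv f x ≠ 0) (m : ℕ) :
    (curveLen f^(m+1) * Real.sqrt (aInt f (m+1)))^2
      ≤ 10000 * ((curveLen f^m * Real.sqrt (aInt f m))^2
        + (curveLen f^m * Real.sqrt (aInt f m))
          * (curveLen f^(m+2) * Real.sqrt (aInt f (m+2)))) := by
  have hL := curveLen_pos hf hreg
  set L := curveLen f with hLdef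
  have ha := aInt_nonneg hf hreg m
  have ha' := aInt_nonneg hf hreg (m+1)
  have ha'' := aInt_nonneg hf hreg (m+2)
  set x := L^m * Real.sqrt (aInt f m) with hxdef
  set y := L^(m+1) * Real.sqrt (aInt f (m+1)) with hydef
  set z := L^(m+2) * Real.sqrt (aInt f (m+2)) with hzdef
  have hx : 0 ≤ x := mul_nonneg (pow_nonneg hL.le _) (Real.sqrt_nonneg _)
  have hy : 0 ≤ y := mul_nonneg (pow_nonneg hL.le _) (Real.sqrt_nonneg _)
  have hz : 0 ≤ z := mul_nonneg (pow_nonneg hL.le _) (Real.sqrt_nonneg _)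
  apply interp_num hx hy hz
  -- endpoint sup bounds
  set M : ℕ → ℝ := fun j => aInt f j / L + 2 * Real.sqrt (aInt f j * aInt f (j+1)) with hM
  have hMnn : ∀ j, 0 ≤ M j := fun j => by
    have h0 := agmon hf hreg j (e := 0) (by norm_num)
    rw [← hLdef] at h0
    have hMj : M j = aInt f j / L + 2 * Real.sqrt (aInt f j * aInt f (j+1)) := rfl
    rw [hMj]
    nlinarith [sq_nonneg (‖nablaSIter f j (kappa f) 0‖)]
  have hend : ∀ j : ℕ, ∀ e ∈ Icc (0:ℝ) 1,
      ‖nablaSIter f j (kappa f) e‖ ≤ Real.sqrt (M j) := by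
    intro j e he
    have h1 := agmon hf hreg j he
    have := Real.sqrt_le_sqrt h1
    rwa [Real.sqrt_sq (norm_nonneg _)] at this
  have hprod : ∀ e ∈ Icc (0:ℝ) 1,
      ‖nablaSIter f m (kappa f) e‖ * ‖nablaSIter f (m+1) (kappa f) e‖
        ≤ Real.sqrt (M m * M (m+1)) := by
    intro e he
    rw [Real.sqrt_mul (hMnn m)]
    exact mul_le_mul (hend m e he) (hend (m+1) e he) (norm_nonneg _) (Real.sqrt_nonneg _)
  have key1 : aInt f (m+1) ≤ 2 * Real.sqrt (M m * M (m+1))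
      + Real.sqrt (aInt f m * aInt f (m+2)) := by
    have h0 := ibp hf hreg m
    have h1 := hprod 1 (by norm_num)
    have h2 := hprod 0 (by norm_num)
    linarith
  -- scaling
  have hL2 : (0:ℝ) ≤ L^(2*m+2) := pow_nonneg hL.le _
  have hmul := mul_le_mul_of_nonneg_left key1 hL2
  have hx2 : x^2 = L^(2*m) * aInt f m := by
    rw [hxdef, mul_pow, ← pow_mul, Real.sq_sqrt ha]; ring_nf
  have hy2 : y^2 = L^(2*m+2) * aInt f (m+1) := by
    rw [hydef, mul_pow, ← pow_mul, Real.sq_sqrt ha']; ring_nf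
  have hxy : x * y = L^(2*m+1) * Real.sqrt (aInt f m * aInt f (m+1)) := by
    rw [hxdef, hydef, Real.sqrt_mul ha]; ring
  have hyz : y * z = L^(2*m+3) * Real.sqrt (aInt f (m+1) * aInt f (m+2)) := by
    rw [hydef, hzdef, Real.sqrt_mul ha']; ring
  have hxz2 : x * z = L^(2*m+2) * Real.sqrt (aInt f m * aInt f (m+2)) := by
    rw [hxdef, hzdef, Real.sqrt_mul ha]; ring
  have c1 : L^(2*m+1) * M m = x^2 + 2*(x*y) := by
    rw [hM]
    simp only []
    rw [hx2, hxy]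
    field_simp
    ring
  have c2 : L^(2*m+3) * M (m+1) = y^2 + 2*(y*z) := by
    rw [hM]
    simp only []
    rw [hy2, hyz]
    field_simp
    ring
  have csqrt : Real.sqrt ((x^2+2*(x*y))*(y^2+2*(y*z)))
      = L^(2*m+2) * Real.sqrt (M m * M (m+1)) := by
    rw [← c1, ← c2]
    rw [show (L^(2*m+1) * M m) * (L^(2*m+3) * M (m+1))
      = (L^(2*m+2))^2 * (M m * M (m+1)) by ring]
    rw [Real.sqrt_mul (sq_nonneg (L^(2*m+2))), Real.sqrt_sq hL2]
  calc y^2 = L^(2*m+2) * aInt f (m+1) := hy2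
    _ ≤ L^(2*m+2) * (2 * Real.sqrt (M m * M (m+1))
          + Real.sqrt (aInt f m * aInt f (m+2))) := hmul
    _ = 2*(L^(2*m+2) * Real.sqrt (M m * M (m+1)))
          + L^(2*m+2) * Real.sqrt (aInt f m * aInt f (m+2)) := by ring
    _ = 2*Real.sqrt ((x^2+2*x*y)*(y^2+2*y*z)) + x*z := by
        rw [← csqrt, ← hxz2, show x^2+2*(x*y) = x^2+2*x*y by ring,
          show y^2+2*(y*z) = y^2+2*y*z by ring]

set_option maxHeartbeats 1000000 in
lemma chain_lemma {k : ℕ} {α : ℕ → ℝ} (hα : ∀ i, 0 ≤ α i)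
    (H : ∀ i, 1 ≤ i → i + 1 ≤ k → α i ^ 2 ≤ 10000 * ((α (i-1))^2 + α (i-1) * α (i+1))) :
    ∀ i ≤ k, α i ≤ (2*((10300:ℝ)^k+1))^i * (α 0 + α k) := by
  have hdown : ∀ t : ℕ, ∀ j : ℕ, 1 ≤ j → j + 1 + t = k →
      α j ≤ 10300^(t+1) * (α (j-1) + α k) := by
    intro t
    induction t with
    | zero =>
      intro j hj hjk
      simp only [Nat.add_zero] at hjk
      have h := H j hj (by omega)
      rw [hjk] at h
      have ha := hα (j-1); have hc := hα k
      have hb : α j ≤ 100 * (α (j-1) + α k) := by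
        refine sq_le_imp (by nlinarith) ?_
        nlinarith [mul_nonneg ha hc]
      norm_num
      nlinarith
    | succ t ih =>
      intro j hj hjk
      have hih := ih (j+1) (by omega) (by omega)
      set E : ℝ := 10300^(t+1) with hE
      have hE1 : (1:ℝ) ≤ E := one_le_pow₀ (by norm_num)
      have hE0 : (0:ℝ) ≤ E := by linarith
      have ha := hα (j-1); have hc := hα k; have hj' := hα j; have hj1 := hα (j+1)
      have h := H j hj (by omega)
      simp only [Nat.add_sub_cancel] at hih
      have h2 : α j ^ 2 ≤ (10000*(α (j-1))^2 + 10000*E*(α (j-1))*(α k))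
          + (10000*E*(α (j-1))) * α j := by
        nlinarith [mul_nonneg ha hj', mul_nonneg ha hc,
          mul_nonneg (mul_nonneg (sub_nonneg.2 hE1) ha) hj',
          mul_nonneg (mul_nonneg (sub_nonneg.2 hE1) ha) hc]
      have hp0 : (0:ℝ) ≤ 10000*E*(α (j-1)) :=
        mul_nonneg (mul_nonneg (by norm_num) hE0) ha
      have hq0 : (0:ℝ) ≤ 10000*(α (j-1))^2 + 10000*E*(α (j-1))*(α k) := by
        have := mul_nonneg (mul_nonneg (mul_nonneg (by norm_num : (0:ℝ) ≤ 10000) hE0) ha) hc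
        nlinarith [sq_nonneg (α (j-1))]
      have h3 := quad_root_bound (x := α j) hp0 hq0 h2
      have hq : 10000*(α (j-1))^2 + 10000*E*(α (j-1))*(α k)
          ≤ (100*(α (j-1)) + 100*E*(α (j-1) + α k))^2 := by
        have e2 : (0:ℝ) ≤ E*(α (j-1))*(α (j-1) + α k) :=
          mul_nonneg (mul_nonneg hE0 ha) (by linarith)
        have e3 : (0:ℝ) ≤ (E*E - E)*((α (j-1) + α k)^2) :=
          mul_nonneg (by nlinarith) (sq_nonneg _)
        have e4 : (0:ℝ) ≤ E*((α (j-1) + α k)^2 - (α (j-1)) * α k) :=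
          mul_nonneg hE0 (by nlinarith [mul_nonneg ha hc])
        nlinarith [e2, e3, e4]
      have hsq : Real.sqrt (10000*(α (j-1))^2 + 10000*E*(α (j-1))*(α k))
          ≤ 100*(α (j-1)) + 100*E*(α (j-1) + α k) := by
        have h' := Real.sqrt_le_sqrt hq
        rwa [Real.sqrt_sq (by nlinarith [mul_nonneg hE0 (add_nonneg ha hc)])] at h'
      have h4 : α j ≤ (10000*E + 100*E + 100) * (α (j-1) + α k) := by
        nlinarith [h3, hsq, mul_nonneg hE0 hc]
      have h5 : (10000*E + 100*E + 100 : ℝ) ≤ 10300^(t+1+1) := by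
        have he : (10300:ℝ)^(t+1+1) = 10300 * E := by rw [hE]; ring
        rw [he]; nlinarith
      nlinarith [mul_nonneg (sub_nonneg.2 h5) (add_nonneg ha hc)]
  have hCk1 : (1:ℝ) ≤ 2*((10300:ℝ)^k+1) := by
    nlinarith [pow_nonneg (by norm_num : (0:ℝ) ≤ 10300) k]
  set C : ℝ := 2*((10300:ℝ)^k+1) with hC
  have hpow : ∀ i : ℕ, (1:ℝ) ≤ C^i := fun i => one_le_pow₀ hCk1
  intro i
  induction i with
  | zero =>
    intro _
    have := hα 0; have := hα k
    simpa using by nlinarith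
  | succ j ihj =>
    intro hjk
    have ha0 := hα 0; have hck := hα k; have haj := hα j
    have hsum : (0:ℝ) ≤ α 0 + α k := by linarith
    have hpj := hpow j
    have hpow_succ : C^(j+1) = C * C^j := pow_succ' C j ▸ rfl
    rcases eq_or_lt_of_le hjk with hlast | hmid
    · have h1 : α (j+1) ≤ 1 * (α 0 + α k) := by rw [hlast]; linarith
      calc α (j+1) ≤ 1 * (α 0 + α k) := h1
        _ ≤ C^(j+1) * (α 0 + α k) := mul_le_mul_of_nonneg_right (hpow (j+1)) hsum
    · have hd := hdown (k - (j+1) - 1) (j+1) (by omega) (by omega)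
      simp only [Nat.add_sub_cancel] at hd
      have hexp : (10300:ℝ)^(k - (j+1) - 1 + 1) ≤ C/2 := by
        have h1 : (10300:ℝ)^(k - (j+1) - 1 + 1) ≤ 10300^k :=
          pow_le_pow_right₀ (by norm_num) (by omega)
        rw [hC]; linarith
      have hj' : α j ≤ C^j * (α 0 + α k) := ihj (by omega)
      have hd2 : α (j+1) ≤ (C/2) * (α j + α k) := by
        have := mul_le_mul_of_nonneg_right hexp (add_nonneg haj hck)
        nlinarith [hd]
      have hCpos : (0:ℝ) < C := by linarith
      calc α (j+1) ≤ (C/2) * (α j + α k) := hd2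
        _ ≤ (C/2) * (C^j * (α 0 + α k) + (α 0 + α k)) := by
            apply mul_le_mul_of_nonneg_left _ (by linarith)
            have : α k ≤ C^j * (α 0 + α k) := by nlinarith
            linarith
        _ ≤ C^(j+1) * (α 0 + α k) := by
            rw [hpow_succ]
            nlinarith [mul_nonneg (sub_nonneg.2 hpj) hsum]

lemma knorm_eq (hf : ContDiff ℝ (⊤ : ℕ∞) f) (hreg : ∀ x ∈ Icc (0:ℝ) 1, deriv f x ≠ 0)
    (i : ℕ) : knorm f i 2
      = Real.sqrt (curveLen f) * (curveLen f ^ i * Real.sqrt (aInt f i)) := by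
  have hL := curveLen_pos hf hreg
  have hint : (∫ x in (0:ℝ)..1, ‖nablaSIter f i (kappa f) x‖ ^ (2:ℝ) * ‖deriv f x‖)
      = aInt f i := by
    have h2 : ∀ x : ℝ, ‖nablaSIter f i (kappa f) x‖ ^ (2:ℝ)
        = ‖nablaSIter f i (kappa f) x‖ ^ (2:ℕ) := fun x => by
      rw [show (2:ℝ) = ((2:ℕ):ℝ) by norm_num, Real.rpow_natCast]
    simp only [h2]
    rfl
  rw [knorm, hint]
  rw [show ((i:ℝ) + 1 - 1/(2:ℝ)) = (i:ℝ) + 1/2 by ring,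
    Real.rpow_add hL, Real.rpow_natCast, ← Real.sqrt_eq_rpow,
    ← Real.sqrt_eq_rpow]
  ring

theorem knormSum_le' (n k : ℕ) (hn : 2 ≤ n) :
    ∃ C : ℝ, 0 < C ∧
      ∀ f : ℝ → EuclideanSpace ℝ (Fin n),
        ContDiff ℝ (⊤ : ℕ∞) f → (∀ x ∈ Icc (0 : ℝ) 1, deriv f x ≠ 0) →
        knormSum f k 2 ≤ C * (knorm f k 2 + knorm f 0 2) := by
  set Cst : ℝ := 2*((10300:ℝ)^k+1) with hCst
  have hCst1 : (1:ℝ) ≤ Cst := by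
    have := pow_nonneg (by norm_num : (0:ℝ) ≤ 10300) k
    rw [hCst]; nlinarith
  refine ⟨(k+1) * Cst^k, by positivity, ?_⟩
  intro f hf hreg
  have hL := curveLen_pos hf hreg
  set α : ℕ → ℝ := fun j => curveLen f ^ j * Real.sqrt (aInt f j) with hα
  have hαnn : ∀ j, 0 ≤ α j := fun j =>
    mul_nonneg (pow_nonneg hL.le _) (Real.sqrt_nonneg _)
  have hknorm : ∀ i, knorm f i 2 = Real.sqrt (curveLen f) * α i := fun i =>
    knorm_eq hf hreg i
  have hchain := chain_lemma (k := k) hαnn (fun i hi hik => by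
    obtain ⟨m, rfl⟩ : ∃ m, i = m + 1 := ⟨i - 1, by omega⟩
    have hd := diamond hf hreg m
    simpa using hd)
  have hbound : ∀ i ≤ k, α i ≤ Cst^k * (α 0 + α k) := by
    intro i hik
    have h1 := hchain i hik
    have h2 : Cst^i ≤ Cst^k := pow_le_pow_right₀ hCst1 hik
    have h3 : 0 ≤ α 0 + α k := add_nonneg (hαnn 0) (hαnn k)
    calc α i ≤ Cst^i * (α 0 + α k) := h1
      _ ≤ Cst^k * (α 0 + α k) := mul_le_mul_of_nonneg_right h2 h3
  have hsqL : 0 ≤ Real.sqrt (curveLen f) := Real.sqrt_nonneg _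
  calc knormSum f k 2 = ∑ i ∈ Finset.range (k+1), Real.sqrt (curveLen f) * α i := by
        rw [knormSum]; exact Finset.sum_congr rfl (fun i _ => hknorm i)
    _ ≤ ∑ i ∈ Finset.range (k+1),
          Real.sqrt (curveLen f) * (Cst^k * (α 0 + α k)) := by
        apply Finset.sum_le_sum
        intro i hi
        exact mul_le_mul_of_nonneg_left
          (hbound i (by simpa [Nat.lt_succ_iff] using Finset.mem_range.1 hi)) hsqL
    _ = (k+1) * Cst^k * (Real.sqrt (curveLen f) * α k + Real.sqrt (curveLen f) * α 0) := by
        rw [Finset.sum_const, Finset.card_range]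
        push_cast
        ring
    _ = (k+1) * Cst^k * (knorm f k 2 + knorm f 0 2) := by
        rw [hknorm k, hknorm 0]


/-- `‖κ‖_{k,2} ≤ C (‖∇ₛᵏκ‖₂ + ‖κ‖₂)` with `C = C(n,k)`. -/
theorem knormSum_le (n k : ℕ) (hn : 2 ≤ n) :
    ∃ C : ℝ, 0 < C ∧
      ∀ f : ℝ → EuclideanSpace ℝ (Fin n),
        ContDiff ℝ (⊤ : ℕ∞) f → (∀ x ∈ Icc (0 : ℝ) 1, deriv f x ≠ 0) →
        knormSum f k 2 ≤ C * (knorm f k 2 + knorm f 0 2) := by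
  exact knormSum_le' n k hn
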